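/- Let X and Z be standard Borel spaces, P_X a probability measure on X, P_Z a probability measure on Z, g : Z → X measurable and c : X × X → [0,∞] measurable. For every Markov kernel Q from X to Z whose P_X-mixture equals P_Z (i.e. the measure A ↦ ∫ Q(x)(A) dP_X(x) equals P_Z), one has W_c(P_X, g#P_Z) ≤ ∫_X ∫_Z c(x, g(z)) dQ(x)(z) dP_X(x). -/

import Mathlib

open MeasureTheory ProbabilityTheory ENNReal

/-- The Wasserstein (optimal transport) cost between two measures on `X` for a cost
function `c : X × X → ℝ≥0∞`: the infimum, over all couplings `π` of `μ` and `ν`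
(probability measures on `X × X` whose first and second marginals are `μ` and `ν`),
of `∫ c dπ`. -/
noncomputable def wassersteinCost {X : Type*} [MeasurableSpace X]
    (c : X × X → ℝ≥0∞) (μ ν : Measure X) : ℝ≥0∞ :=
  ⨅ (π : Measure (X × X)) (_ : IsProbabilityMeasure π)
    (_ : π.map Prod.fst = μ) (_ : π.map Prod.snd = ν), ∫⁻ p, c p ∂π

/-- For any Markov kernel `Q` from `X` to `Z` whose `P_X`-mixture is `P_Z`, the expected
reconstruction cost `∫∫ c (x, g z) dQ(x)(z) dP_X(x)` upper bounds `W_c(P_X, g#P_Z)`. -/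
theorem wassersteinCost_le_of_kernel
    {X Z : Type*} [MeasurableSpace X] [StandardBorelSpace X]
    [MeasurableSpace Z] [StandardBorelSpace Z]
    (P_X : Measure X) [IsProbabilityMeasure P_X]
    (P_Z : Measure Z) [IsProbabilityMeasure P_Z]
    (g : Z → X) (hg : Measurable g)
    (c : X × X → ℝ≥0∞) (hc : Measurable c)
    (Q : Kernel X Z) [IsMarkovKernel Q]
    (hQ : P_X.bind (fun x => Q x) = P_Z) :
    wassersteinCost c P_X (P_Z.map g) ≤ ∫⁻ x, ∫⁻ z, c (x, g z) ∂(Q x) ∂P_X := by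
  set π : Measure (X × X) := (P_X ⊗ₘ Q).map (fun p => (p.1, g p.2)) with hπ
  have hm : Measurable (fun p : X × Z => (p.1, g p.2)) :=
    measurable_fst.prodMk (hg.comp measurable_snd)
  have hπprob : IsProbabilityMeasure π := Measure.isProbabilityMeasure_map hm.aemeasurable
  have h1 : π.map Prod.fst = P_X := by
    rw [hπ, Measure.map_map measurable_fst hm]
    have : (Prod.fst ∘ fun p : X × Z => (p.1, g p.2)) = Prod.fst := rfl
    rw [this]
    exact Measure.fst_compProd P_X Q
  have h2 : π.map Prod.snd = P_Z.map g := by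
    rw [hπ, Measure.map_map measurable_snd hm]
    have : (Prod.snd ∘ fun p : X × Z => (p.1, g p.2)) = g ∘ Prod.snd := rfl
    rw [this, ← Measure.map_map hg measurable_snd]
    congr 1
    rw [← hQ]
    ext s hs
    rw [Measure.map_apply measurable_snd hs, Measure.compProd_apply (measurable_snd hs),
      Measure.bind_apply hs Q.measurable.aemeasurable]
    rfl
  have h3 : ∫⁻ p, c p ∂π = ∫⁻ x, ∫⁻ z, c (x, g z) ∂(Q x) ∂P_X := by
    rw [hπ, lintegral_map hc hm]
    exact Measure.lintegral_compProd (hc.comp hm)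
  calc wassersteinCost c P_X (P_Z.map g) ≤ ∫⁻ p, c p ∂π := by
        exact iInf_le_of_le π (iInf_le_of_le hπprob (iInf_le_of_le h1 (iInf_le_of_le h2 le_rfl)))
    _ = _ := h3
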